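/- Let μ have density φ = (2/3)·𝟙_{[0,1)} + (1/3)·𝟙_{[1,2)} with respect to Lebesgue measure on ℝ. Then the Fourier transform satisfies μ̂(t) = (1/(6πit))(e^{4πit} + e^{2πit} − 2) for t ≠ 0, and μ̂(t) = 0 if and only if t ∈ ℤ \ {0}. Consequently {e_n : n ∈ ℤ} is a maximal orthogonal set of exponentials in L²(μ) which is not complete. -/

import Mathlib

open MeasureTheory Complex
open scoped ENNReal

/-- The exponential `e_λ(x) = exp(2πi λ x)` on `ℝ`. -/
noncomputable def expFn (lam x : ℝ) : ℂ := Complex.exp (2 * Real.pi * Complex.I * (lam * x))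

lemma key (φ : ℝ → ℝ)
    (hφ : φ = fun x => (2/3) * Set.indicator (Set.Ico (0:ℝ) 1) (fun _ => (1:ℝ)) x
      + (1/3) * Set.indicator (Set.Ico (1:ℝ) 2) (fun _ => (1:ℝ)) x)
    (μ : Measure ℝ) (hμ : μ = volume.withDensity (fun x => ENNReal.ofReal (φ x)))
    (g : ℝ → ℂ) (h1 : IntegrableOn g (Set.Ico 0 1)) (h2 : IntegrableOn g (Set.Ico 1 2)) :
    ∫ x, g x ∂μ = (2/3 : ℂ) * (∫ x in Set.Ico (0:ℝ) 1, g x)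
      + (1/3 : ℂ) * (∫ x in Set.Ico (1:ℝ) 2, g x) := by
  subst hμ
  have hmeas : Measurable fun x : ℝ => (φ x).toNNReal := by
    apply Measurable.real_toNNReal
    rw [hφ]
    exact ((measurable_const.indicator measurableSet_Ico).const_mul _).add
      ((measurable_const.indicator measurableSet_Ico).const_mul _)
  have hint1 : Integrable (Set.indicator (Set.Ico (0:ℝ) 1) g) :=
    (integrable_indicator_iff measurableSet_Ico).2 h1
  have hint2 : Integrable (Set.indicator (Set.Ico (1:ℝ) 2) g) :=
    (integrable_indicator_iff measurableSet_Ico).2 h2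
  calc ∫ x, g x ∂(volume.withDensity (fun x => ENNReal.ofReal (φ x)))
      = ∫ x, (φ x).toNNReal • g x := integral_withDensity_eq_integral_smul hmeas g
    _ = ∫ x, ((2/3 : ℂ) • Set.indicator (Set.Ico (0:ℝ) 1) g x
          + (1/3 : ℂ) • Set.indicator (Set.Ico (1:ℝ) 2) g x) := by
        congr 1; funext x
        by_cases hx1 : x ∈ Set.Ico (0:ℝ) 1
        · have hx2 : x ∉ Set.Ico (1:ℝ) 2 := by
            simp only [Set.mem_Ico] at hx1 ⊢; intro h; linarith [hx1.2]
          have hv : φ x = 2/3 := by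
            simp [hφ, Set.indicator_of_mem hx1, Set.indicator_of_notMem hx2]
          rw [Set.indicator_of_mem hx1, Set.indicator_of_notMem hx2, smul_zero, add_zero, hv,
            NNReal.smul_def, Real.coe_toNNReal _ (by norm_num : (0:ℝ) ≤ 2/3),
            Complex.real_smul, smul_eq_mul]
          norm_num
        · by_cases hx2 : x ∈ Set.Ico (1:ℝ) 2
          · have hv : φ x = 1/3 := by
              simp [hφ, Set.indicator_of_mem hx2, Set.indicator_of_notMem hx1]
            rw [Set.indicator_of_notMem hx1, Set.indicator_of_mem hx2, smul_zero, zero_add, hv,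
              NNReal.smul_def, Real.coe_toNNReal _ (by norm_num : (0:ℝ) ≤ 1/3),
              Complex.real_smul, smul_eq_mul]
            norm_num
          · have hv : φ x = 0 := by
              simp [hφ, Set.indicator_of_notMem hx1, Set.indicator_of_notMem hx2]
            rw [Set.indicator_of_notMem hx1, Set.indicator_of_notMem hx2, smul_zero, smul_zero,
              add_zero, hv]
            simp
    _ = (2/3 : ℂ) * (∫ x in Set.Ico (0:ℝ) 1, g x) + (1/3 : ℂ) * (∫ x in Set.Ico (1:ℝ) 2, g x) := by
        have hadd := integral_add (μ := volume) (hint1.smul ((2:ℂ)/3)) (hint2.smul ((1:ℂ)/3))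
        simp only [Pi.smul_apply] at hadd
        rw [hadd, integral_smul, integral_smul,
          integral_indicator measurableSet_Ico, integral_indicator measurableSet_Ico,
          smul_eq_mul, smul_eq_mul]

lemma ico_exp {a b : ℝ} (hab : a ≤ b) {c : ℂ} (hc : c ≠ 0) :
    ∫ x in Set.Ico a b, Complex.exp (c * x) =
      (Complex.exp (c * b) - Complex.exp (c * a)) / c := by
  rw [MeasureTheory.integral_Ico_eq_integral_Ioo, ← MeasureTheory.integral_Ioc_eq_integral_Ioo,
    ← intervalIntegral.integral_of_le hab, integral_exp_mul_complex hc]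

lemma exp_cont (c : ℂ) : Continuous fun x : ℝ => Complex.exp (c * x) :=
  Complex.continuous_exp.comp (continuous_const.mul (Complex.continuous_ofReal))

lemma exp_ion (c : ℂ) (a b : ℝ) : IntegrableOn (fun x : ℝ => Complex.exp (c * x)) (Set.Ico a b) :=
  ((exp_cont c).integrableOn_Icc (a := a) (b := b)).mono_set Set.Ico_subset_Icc_self

lemma hconj (lam x : ℝ) : (starRingEnd ℂ) (expFn lam x)
    = Complex.exp ((-(2*Real.pi*Complex.I*lam)) * x) := by
  rw [expFn, ← Complex.exp_conj]
  congr 1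
  simp only [map_mul, Complex.conj_I, Complex.conj_ofReal, map_ofNat]
  ring

lemma hprod (t lam x : ℝ) : expFn t x * (starRingEnd ℂ) (expFn lam x)
    = Complex.exp (2 * Real.pi * Complex.I * (((t - lam : ℝ)) * x)) := by
  rw [hconj, expFn, ← Complex.exp_add]
  congr 1
  push_cast
  ring

lemma fhat (φ : ℝ → ℝ)
    (hφ : φ = fun x => (2/3) * Set.indicator (Set.Ico (0:ℝ) 1) (fun _ => (1:ℝ)) x
      + (1/3) * Set.indicator (Set.Ico (1:ℝ) 2) (fun _ => (1:ℝ)) x)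
    (μ : Measure ℝ) (hμ : μ = volume.withDensity (fun x => ENNReal.ofReal (φ x)))
    (t : ℝ) (ht : t ≠ 0) :
    (∫ x, Complex.exp (2 * Real.pi * Complex.I * (t * x)) ∂μ) =
      (1 / (6 * Real.pi * Complex.I * t)) *
        (Complex.exp (2 * Real.pi * Complex.I * (2 * t)) +
          Complex.exp (2 * Real.pi * Complex.I * t) - 2) := by
  have hπ : (Real.pi : ℂ) ≠ 0 := Complex.ofReal_ne_zero.2 Real.pi_ne_zero
  have htC : (t : ℂ) ≠ 0 := Complex.ofReal_ne_zero.2 ht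
  set c : ℂ := 2 * Real.pi * Complex.I * t with hc
  have hcne : c ≠ 0 := by
    simp only [hc]
    exact mul_ne_zero (mul_ne_zero (mul_ne_zero two_ne_zero hπ) Complex.I_ne_zero) htC
  have harg : ∀ x : ℝ, (2 * (Real.pi:ℂ) * Complex.I * (t * x)) = c * x := fun x => by
    simp only [hc]; ring
  simp only [harg]
  rw [key φ hφ μ hμ _ (exp_ion c 0 1) (exp_ion c 1 2),
    ico_exp (by norm_num) hcne, ico_exp (by norm_num) hcne]
  have h6 : (6 * (Real.pi:ℂ) * Complex.I * t) = 3 * c := by simp only [hc]; ring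
  rw [show ((1:ℝ):ℂ) = (1:ℂ) by norm_num, show ((0:ℝ):ℂ) = 0 by norm_num,
    mul_one, mul_zero, Complex.exp_zero, h6]
  rw [show Complex.exp (2 * Real.pi * Complex.I * (2 * t)) = Complex.exp (c * ((2:ℝ):ℂ)) by
    rw [hc]; congr 1; push_cast; ring]
  field_simp
  ring

lemma int_one (φ : ℝ → ℝ)
    (hφ : φ = fun x => (2/3) * Set.indicator (Set.Ico (0:ℝ) 1) (fun _ => (1:ℝ)) x
      + (1/3) * Set.indicator (Set.Ico (1:ℝ) 2) (fun _ => (1:ℝ)) x)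
    (μ : Measure ℝ) (hμ : μ = volume.withDensity (fun x => ENNReal.ofReal (φ x))) :
    (∫ x, (1:ℂ) ∂μ) = 1 := by
  have h1 : IntegrableOn (fun _ : ℝ => (1:ℂ)) (Set.Ico (0:ℝ) 1) := integrableOn_const (by simp [Real.volume_Ico])
  have h2 : IntegrableOn (fun _ : ℝ => (1:ℂ)) (Set.Ico (1:ℝ) 2) := integrableOn_const (by simp [Real.volume_Ico])
  rw [key φ hφ μ hμ _ h1 h2]
  simp [Real.volume_Ico]
  norm_num

lemma part2 (φ : ℝ → ℝ)
    (hφ : φ = fun x => (2/3) * Set.indicator (Set.Ico (0:ℝ) 1) (fun _ => (1:ℝ)) x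
      + (1/3) * Set.indicator (Set.Ico (1:ℝ) 2) (fun _ => (1:ℝ)) x)
    (μ : Measure ℝ) (hμ : μ = volume.withDensity (fun x => ENNReal.ofReal (φ x)))
    (t : ℝ) :
    ((∫ x, Complex.exp (2 * Real.pi * Complex.I * (t * x)) ∂μ) = 0 ↔
      ∃ n : ℤ, n ≠ 0 ∧ t = (n : ℝ)) := by
  have hπ : (Real.pi : ℂ) ≠ 0 := Complex.ofReal_ne_zero.2 Real.pi_ne_zero
  have h2πI : (2 * (Real.pi:ℂ) * Complex.I) ≠ 0 :=
    mul_ne_zero (mul_ne_zero two_ne_zero hπ) Complex.I_ne_zero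
  by_cases ht : t = 0
  · subst ht
    have : (∫ x, Complex.exp (2 * Real.pi * Complex.I * ((0:ℝ) * x)) ∂μ) = 1 := by
      have : ∀ x : ℝ, Complex.exp (2 * Real.pi * Complex.I * (((0:ℝ):ℂ) * x)) = 1 := fun x => by
        norm_num
      simp only [this]
      exact int_one φ hφ μ hμ
    rw [this]
    simp only [one_ne_zero, false_iff]
    rintro ⟨n, hn, h0⟩
    exact hn (by exact_mod_cast h0.symm)
  · rw [fhat φ hφ μ hμ t ht]
    constructor
    · intro h
      have htC : (t : ℂ) ≠ 0 := Complex.ofReal_ne_zero.2 ht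
      have hden : (1 / (6 * (Real.pi:ℂ) * Complex.I * t)) ≠ 0 := by
        apply one_div_ne_zero
        exact mul_ne_zero (mul_ne_zero (mul_ne_zero (by norm_num) hπ) Complex.I_ne_zero) htC
      have hnum : Complex.exp (2 * Real.pi * Complex.I * (2 * t)) +
          Complex.exp (2 * Real.pi * Complex.I * t) - 2 = 0 := by
        rcases mul_eq_zero.1 h with h' | h'
        · exact absurd h' hden
        · exact h'
      set z : ℂ := Complex.exp (2 * Real.pi * Complex.I * t) with hz
      have hsq : Complex.exp (2 * (Real.pi:ℂ) * Complex.I * (2 * t)) = z ^ 2 := by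
        rw [hz, ← Complex.exp_nat_mul]
        norm_num
        ring_nf
      rw [hsq] at hnum
      have hfac : (z - 1) * (z + 2) = 0 := by linear_combination hnum
      have habs : ‖z‖ = 1 := by
        rw [hz, show (2 * (Real.pi:ℂ) * Complex.I * t) = ((2 * Real.pi * t : ℝ):ℂ) * Complex.I by
          push_cast; ring]
        exact Complex.norm_exp_ofReal_mul_I _
      have hz1 : z = 1 := by
        rcases mul_eq_zero.1 hfac with h' | h'
        · exact sub_eq_zero.1 h'
        · exfalso
          have hzv : z = -2 := by linear_combination h'
          rw [hzv] at habs
          simp [map_neg] at habs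
      rw [hz] at hz1
      obtain ⟨n, heq⟩ := Complex.exp_eq_one_iff.1 hz1
      have htn : (t : ℂ) = (n : ℂ) := by
        apply mul_left_cancel₀ h2πI
        linear_combination heq
      have htn' : t = (n : ℝ) := by exact_mod_cast htn
      refine ⟨n, ?_, htn'⟩
      rintro rfl
      exact ht (by simpa using htn')
    · rintro ⟨n, hn, rfl⟩
      have e1 : Complex.exp (2 * Real.pi * Complex.I * ((n:ℝ):ℂ)) = 1 := by
        rw [show (2 * (Real.pi:ℂ) * Complex.I * ((n:ℝ):ℂ)) = (n:ℂ) * (2 * Real.pi * Complex.I) by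
          push_cast; ring]
        exact Complex.exp_int_mul_two_pi_mul_I n
      have e2 : Complex.exp (2 * Real.pi * Complex.I * (2 * ((n:ℝ):ℂ))) = 1 := by
        rw [show (2 * (Real.pi:ℂ) * Complex.I * (2 * ((n:ℝ):ℂ))) =
            ((2*n : ℤ):ℂ) * (2 * Real.pi * Complex.I) by push_cast; ring]
        exact Complex.exp_int_mul_two_pi_mul_I _
      rw [e1, e2]
      ring

/-- for `dμ = ((2/3)·𝟙_{[0,1)} + (1/3)·𝟙_{[1,2)}) dx`, the Fourier transform is
`μ̂(t) = (1/(6πit))(e^{4πit} + e^{2πit} − 2)` for `t ≠ 0`, vanishing exactly on `ℤ \ {0}`;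
hence `{e_n : n ∈ ℤ}` is a maximal orthogonal family of exponentials in `L²(μ)` which is not
complete. -/
theorem stmt19 (φ : ℝ → ℝ)
    (hφ : φ = fun x => (2/3) * Set.indicator (Set.Ico (0:ℝ) 1) (fun _ => (1:ℝ)) x
      + (1/3) * Set.indicator (Set.Ico (1:ℝ) 2) (fun _ => (1:ℝ)) x)
    (μ : Measure ℝ) (hμ : μ = volume.withDensity (fun x => ENNReal.ofReal (φ x))) :
    (∀ t : ℝ, t ≠ 0 →
      (∫ x, Complex.exp (2 * Real.pi * Complex.I * (t * x)) ∂μ) =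
        (1 / (6 * Real.pi * Complex.I * t)) *
          (Complex.exp (2 * Real.pi * Complex.I * (2 * t)) +
            Complex.exp (2 * Real.pi * Complex.I * t) - 2)) ∧
    (∀ t : ℝ, ((∫ x, Complex.exp (2 * Real.pi * Complex.I * (t * x)) ∂μ) = 0 ↔
      ∃ n : ℤ, n ≠ 0 ∧ t = (n : ℝ))) ∧
    (∀ n m : ℤ, ∫ x, expFn n x * (starRingEnd ℂ) (expFn m x) ∂μ = if n = m then 1 else 0) ∧
    (∀ t : ℝ, (∀ n : ℤ, ∫ x, expFn t x * (starRingEnd ℂ) (expFn n x) ∂μ = 0) →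
      ∃ n : ℤ, t = (n : ℝ)) ∧
    ¬ (∀ f : ℝ → ℂ, MemLp f 2 μ →
        (∀ n : ℤ, ∫ x, f x * (starRingEnd ℂ) (expFn n x) ∂μ = 0) → f =ᵐ[μ] 0) := by
  refine ⟨fhat φ hφ μ hμ, part2 φ hφ μ hμ, ?_, ?_, ?_⟩
  · -- part 3: orthonormality
    intro n m
    simp only [hprod]
    by_cases h : n = m
    · subst h
      rw [if_pos rfl]
      have : ∀ x : ℝ, Complex.exp (2 * (Real.pi:ℂ) * Complex.I * ((((n:ℝ) - n : ℝ)) * x)) = 1 := by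
        intro x; norm_num
      simp only [this]
      exact int_one φ hφ μ hμ
    · rw [if_neg h]
      refine (part2 φ hφ μ hμ _).2 ⟨n - m, sub_ne_zero.2 h, by push_cast; ring⟩
  · -- part 4: maximality
    intro t h
    have h0 := h 0
    simp only [hprod] at h0
    have harg : ∀ x : ℝ,
        Complex.exp (2 * (Real.pi:ℂ) * Complex.I * ((((t:ℝ) - ((0:ℤ):ℝ)) : ℝ) * x))
        = Complex.exp (2 * (Real.pi:ℂ) * Complex.I * ((t:ℝ) * x)) := by
      intro x; norm_num
    simp only [harg] at h0
    obtain ⟨n, _, hn⟩ := (part2 φ hφ μ hμ t).1 h0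
    exact ⟨n, hn⟩
  · -- part 5: incompleteness
    intro H
    set f : ℝ → ℂ := fun x => Set.indicator (Set.Ico (0:ℝ) 1) (fun _ => (1:ℂ)) x
      + Set.indicator (Set.Ico (1:ℝ) 2) (fun _ => (-2:ℂ)) x with hf
    have hdisj : ∀ x : ℝ, x ∈ Set.Ico (0:ℝ) 1 → x ∉ Set.Ico (1:ℝ) 2 := by
      intro x hx; simp only [Set.mem_Ico] at hx ⊢; intro h; linarith [hx.2]
    have hf1 : ∀ x ∈ Set.Ico (0:ℝ) 1, f x = 1 := by
      intro x hx
      simp only [hf, Set.indicator_of_mem hx, Set.indicator_of_notMem (hdisj x hx), add_zero]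
    have hf2 : ∀ x ∈ Set.Ico (1:ℝ) 2, f x = -2 := by
      intro x hx
      have hx1 : x ∉ Set.Ico (0:ℝ) 1 := by
        simp only [Set.mem_Ico] at hx ⊢; intro h; linarith [hx.1]
      simp only [hf, Set.indicator_of_mem hx, Set.indicator_of_notMem hx1, zero_add]
    have hfin : IsFiniteMeasure μ := by
      constructor
      rw [hμ, withDensity_apply _ MeasurableSet.univ, Measure.restrict_univ]
      calc ∫⁻ x, ENNReal.ofReal (φ x) ∂volume
          ≤ ∫⁻ x, Set.indicator (Set.Ico (0:ℝ) 2) (fun _ => (1:ℝ≥0∞)) x ∂volume := by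
            apply lintegral_mono
            intro x
            by_cases hx : x ∈ Set.Ico (0:ℝ) 2
            · rw [Set.indicator_of_mem hx]
              apply ENNReal.ofReal_le_one.2
              rw [hφ]
              by_cases h1 : x ∈ Set.Ico (0:ℝ) 1 <;> by_cases h2 : x ∈ Set.Ico (1:ℝ) 2 <;>
                simp [Set.indicator_of_mem, Set.indicator_of_notMem, h1, h2] <;> norm_num
            · have h1 : x ∉ Set.Ico (0:ℝ) 1 := fun h =>
                hx (Set.Ico_subset_Ico_right (by norm_num) h)
              have h2 : x ∉ Set.Ico (1:ℝ) 2 := fun h =>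
                hx (Set.Ico_subset_Ico_left (by norm_num) h)
              rw [Set.indicator_of_notMem hx, hφ]
              simp [Set.indicator_of_notMem h1, Set.indicator_of_notMem h2]
        _ = volume (Set.Ico (0:ℝ) 2) := by
            rw [lintegral_indicator measurableSet_Ico, setLIntegral_one]
        _ < ⊤ := by rw [Real.volume_Ico]; norm_num
    have hmeasf : Measurable f := by
      apply Measurable.add <;> exact measurable_const.indicator measurableSet_Ico
    have hmem : MemLp f 2 μ := by
      apply MemLp.of_bound hmeasf.aestronglyMeasurable 2
      apply ae_of_all
      intro x
      by_cases h1 : x ∈ Set.Ico (0:ℝ) 1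
      · rw [hf1 x h1]; norm_num
      · by_cases h2 : x ∈ Set.Ico (1:ℝ) 2
        · rw [hf2 x h2]; norm_num
        · simp only [hf, Set.indicator_of_notMem h1, Set.indicator_of_notMem h2, add_zero]
          norm_num
    have horth : ∀ n : ℤ, ∫ x, f x * (starRingEnd ℂ) (expFn n x) ∂μ = 0 := by
      intro n
      set c : ℂ := -(2*Real.pi*Complex.I*(n:ℝ)) with hc
      have hcint : ∀ x : ℝ, f x * (starRingEnd ℂ) (expFn n x) = f x * Complex.exp (c * x) := by
        intro x; rw [hconj]
      simp only [hcint]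
      have heq1 : Set.EqOn (fun x : ℝ => f x * Complex.exp (c * x))
          (fun x : ℝ => Complex.exp (c * x)) (Set.Ico 0 1) := by
        intro x hx; simp only [hf1 x hx, one_mul]
      have heq2 : Set.EqOn (fun x : ℝ => f x * Complex.exp (c * x))
          (fun x : ℝ => (-2 : ℂ) * Complex.exp (c * x)) (Set.Ico 1 2) := by
        intro x hx; simp only [hf2 x hx]
      have hi1 : IntegrableOn (fun x : ℝ => f x * Complex.exp (c * x)) (Set.Ico 0 1) :=
        (exp_ion c 0 1).congr_fun (fun x hx => (heq1 hx).symm) measurableSet_Ico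
      have hi2' : IntegrableOn (fun x : ℝ => (-2:ℂ) * Complex.exp (c * x)) (Set.Ico 1 2) :=
        (exp_ion c 1 2).const_mul (-2 : ℂ)
      have hi2 : IntegrableOn (fun x : ℝ => f x * Complex.exp (c * x)) (Set.Ico 1 2) :=
        hi2'.congr_fun (fun x hx => (heq2 hx).symm) measurableSet_Ico
      rw [key φ hφ μ hμ _ hi1 hi2, setIntegral_congr_fun measurableSet_Ico heq1,
        setIntegral_congr_fun measurableSet_Ico heq2, integral_const_mul]
      by_cases hn : n = 0
      · subst hn
        have : c = 0 := by simp [hc]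
        simp only [this, zero_mul, Complex.exp_zero]
        rw [setIntegral_const, setIntegral_const]
        simp [Real.volume_Ico]
        norm_num
      · have hcne : c ≠ 0 := by
          simp only [hc, neg_ne_zero]
          exact mul_ne_zero (mul_ne_zero (mul_ne_zero two_ne_zero
            (Complex.ofReal_ne_zero.2 Real.pi_ne_zero)) Complex.I_ne_zero)
            (Complex.ofReal_ne_zero.2 (Int.cast_ne_zero.2 hn))
        rw [ico_exp (by norm_num) hcne, ico_exp (by norm_num) hcne]
        have e0 : Complex.exp (c * ((0:ℝ):ℂ)) = 1 := by norm_num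
        have e1 : Complex.exp (c * ((1:ℝ):ℂ)) = 1 := by
          rw [show c * ((1:ℝ):ℂ) = ((-n : ℤ):ℂ) * (2 * Real.pi * Complex.I) by
            simp only [hc]; push_cast; ring]
          exact Complex.exp_int_mul_two_pi_mul_I _
        have e2 : Complex.exp (c * ((2:ℝ):ℂ)) = 1 := by
          rw [show c * ((2:ℝ):ℂ) = ((-2*n : ℤ):ℂ) * (2 * Real.pi * Complex.I) by
            simp only [hc]; push_cast; ring]
          exact Complex.exp_int_mul_two_pi_mul_I _
        rw [e0, e1, e2]
        ring
    have hae := H f hmem horth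
    have hnull : μ {x | f x ≠ 0} = 0 := by
      have := hae
      rw [Filter.EventuallyEq, ae_iff] at this
      simpa using this
    have hsub : Set.Ico (0:ℝ) 1 ⊆ {x | f x ≠ 0} := by
      intro x hx
      simp only [Set.mem_setOf_eq, hf1 x hx]
      norm_num
    have h0 : μ (Set.Ico (0:ℝ) 1) = 0 := measure_mono_null hsub hnull
    have h23 : μ (Set.Ico (0:ℝ) 1) = ENNReal.ofReal (2/3) := by
      rw [hμ, withDensity_apply _ measurableSet_Ico]
      rw [setLIntegral_congr_fun_ae measurableSet_Ico (ae_of_all _ (fun x hx => by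
        rw [hφ]
        simp only [Set.indicator_of_mem hx, Set.indicator_of_notMem (hdisj x hx)]
        norm_num : ∀ x ∈ Set.Ico (0:ℝ) 1, ENNReal.ofReal (φ x) = ENNReal.ofReal (2/3)))]
      rw [setLIntegral_const, Real.volume_Ico]
      norm_num
    rw [h0] at h23
    have : (0:ℝ≥0∞) ≠ ENNReal.ofReal (2/3) := by
      symm
      simp only [ne_eq, ENNReal.ofReal_eq_zero, not_le]
      norm_num
    exact this h23
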